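/- Let K be a field, X a set, G a group of permutations of X, ≤ a term ordering of X^⋄, and I a G-invariant ideal of R = K[X]. For σ ∈ G, let ≤_σ be the term ordering defined by v ≤_σ w iff σv ≤ σw, and let lm_σ(f) denote the leading monomial of f with respect to ≤_σ. If B is a Gröbner basis for I (with respect to ≤), then for every σ ∈ G and every nonzero f ∈ I there exists h ∈ GB = {τg : τ ∈ G, g ∈ B} with lm_σ(h) dividing lm_σ(f); that is, GB is a universal G-Gröbner basis for I. -/

import Mathlib

/-- A quasi-ordering (here: any binary relation) `r` on `S` is a well-quasi-ordering if
every infinite sequence is good, i.e. there are `i < j` with `r (f i) (f j)`. -/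
def IsWQO {S : Type*} (r : S → S → Prop) : Prop :=
  ∀ f : ℕ → S, ∃ i j : ℕ, i < j ∧ r (f i) (f j)

/-- A term ordering of the monoid of monomials `X →₀ ℕ`: a linear order which is
well-founded, with `1 ≤ x` for every indeterminate `x`, and compatible with
multiplication by indeterminates. -/
def IsTermOrder {X : Type*} (r : (X →₀ ℕ) → (X →₀ ℕ) → Prop) : Prop :=
  IsLinearOrder (X →₀ ℕ) r ∧
  WellFounded (fun v w : X →₀ ℕ => r v w ∧ v ≠ w) ∧
  (∀ x : X, r 0 (Finsupp.single x 1)) ∧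
  (∀ (v w : X →₀ ℕ) (x : X), r v w → r (Finsupp.single x 1 + v) (Finsupp.single x 1 + w))

/-- The symmetric cancellation ordering corresponding to a permutation group `G` on `X`
and a term ordering `r` of the monomials `X →₀ ℕ`:  `v ⪯ w` iff `r v w` and there are
`σ ∈ G` and a monomial `u` with `w = u·σv` and `u·σv' ≤ w` for every `v' ≤ v`. -/
def SymCancel {X : Type*} (G : Subgroup (Equiv.Perm X))
    (r : (X →₀ ℕ) → (X →₀ ℕ) → Prop) (v w : X →₀ ℕ) : Prop :=
  r v w ∧ ∃ σ : Equiv.Perm X, σ ∈ G ∧ ∃ u : X →₀ ℕ,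
    w = u + Finsupp.mapDomain (⇑σ) v ∧
    ∀ v' : X →₀ ℕ, r v' v → r (u + Finsupp.mapDomain (⇑σ) v') w

/-- The lexicographic ordering of monomials induced by a linear order on `X`:
`v ≤lex w` iff `v = w` or there is `x` with `v x < w x` and `v y = w y` for all `y > x`. -/
def LexLe {X : Type*} [LinearOrder X] (v w : X →₀ ℕ) : Prop :=
  v = w ∨ ∃ x : X, v x < w x ∧ ∀ y : X, x < y → v y = w y

private lemma termOrder_add_left {X : Type*} {r : (X →₀ ℕ) → (X →₀ ℕ) → Prop}
    (hr : IsTermOrder r) (u : X →₀ ℕ) :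
    ∀ {v w : X →₀ ℕ}, r v w → r (u + v) (u + w) := by
  haveI := hr.1
  induction u using Finsupp.induction with
  | zero => intro v w h; simpa using h
  | single_add x n u hx hn ih =>
    intro v w h
    have key : ∀ k : ℕ, r (Finsupp.single x k + (u + v)) (Finsupp.single x k + (u + w)) := by
      intro k
      induction k with
      | zero => simpa using ih h
      | succ k ihk =>
        have : Finsupp.single x (k + 1) = Finsupp.single x 1 + Finsupp.single x k := by
          rw [← Finsupp.single_add]; ring_nf
        rw [this, add_assoc, add_assoc]
        exact hr.2.2.2 _ _ x ihk
    simpa [add_assoc] using key n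

private lemma termOrder_cancel {X : Type*} {r : (X →₀ ℕ) → (X →₀ ℕ) → Prop}
    (hr : IsTermOrder r) {u v w : X →₀ ℕ} (h : r (u + v) (u + w)) : r v w := by
  haveI := hr.1
  rcases Std.Total.total (r := r) v w with h' | h'
  · exact h'
  · have h2 := termOrder_add_left hr u h'
    have : u + v = u + w := Std.Antisymm.antisymm _ _ h h2
    have : v = w := add_left_cancel this
    subst this
    exact Std.Refl.refl _

/-- Let `K` be a field, `r` a term ordering, `I` a `G`-invariant ideal
of `K[X]` and `B` a Gröbner basis for `I` (field case: every nonzero `f ∈ I` has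
`lm g ⪯ lm f` for some `g ∈ B`).  Then `GB = {τg : τ ∈ G, g ∈ B}` is a universal
`G`-Gröbner basis for `I`: for every `σ ∈ G` and nonzero `f ∈ I` some `h ∈ GB` has
`lm_σ(h) ∣ lm_σ(f)`, where `lm_σ` is the leading monomial for the order
`v ≤_σ w ↔ σv ≤ σw`. -/
theorem stmt15 {K : Type*} [Field K] {X : Type*}
    (G : Subgroup (Equiv.Perm X)) (r : (X →₀ ℕ) → (X →₀ ℕ) → Prop)
    (hr : IsTermOrder r)
    (I : Ideal (MvPolynomial X K))
    (hI : ∀ σ ∈ G, ∀ f ∈ I, MvPolynomial.rename (⇑σ) f ∈ I)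
    (B : Set (MvPolynomial X K)) (hBI : B ⊆ (I : Set (MvPolynomial X K)))
    (hB0 : ∀ g ∈ B, g ≠ 0)
    (hGB : ∀ f ∈ I, f ≠ 0 → ∀ vf ∈ f.support, (∀ m ∈ f.support, r m vf) →
      ∃ g ∈ B, ∃ vg ∈ MvPolynomial.support g,
        (∀ m ∈ MvPolynomial.support g, r m vg) ∧ SymCancel G r vg vf) :
    ∀ σ : Equiv.Perm X, σ ∈ G → ∀ f ∈ I, f ≠ 0 → ∀ vf ∈ f.support,
      (∀ m ∈ f.support,
        r (Finsupp.mapDomain (⇑σ) m) (Finsupp.mapDomain (⇑σ) vf)) →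
      ∃ τ : Equiv.Perm X, τ ∈ G ∧ ∃ g ∈ B,
        ∃ vh ∈ (MvPolynomial.rename (⇑τ) g).support,
          (∀ m ∈ (MvPolynomial.rename (⇑τ) g).support,
            r (Finsupp.mapDomain (⇑σ) m) (Finsupp.mapDomain (⇑σ) vh)) ∧
          ∃ u : X →₀ ℕ, vf = u + vh := by
  classical
  intro σ hσ f hf hf0 vf hvf hlm
  haveI := hr.1
  set f' := MvPolynomial.rename (⇑σ) f with hf'def
  have hf'I : f' ∈ I := hI σ hσ f hf
  have hinj : Function.Injective (⇑σ) := σ.injective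
  have hf'0 : f' ≠ 0 := fun h => hf0 (by
    have := (MvPolynomial.rename_injective (R := K) (⇑σ) hinj)
    exact this (by simpa using h))
  have hsupp : f'.support = Finset.image (Finsupp.mapDomain (⇑σ)) f.support :=
    MvPolynomial.support_rename_of_injective hinj
  have hvf' : Finsupp.mapDomain (⇑σ) vf ∈ f'.support := by
    rw [hsupp]; exact Finset.mem_image_of_mem _ hvf
  have hlm' : ∀ m ∈ f'.support, r m (Finsupp.mapDomain (⇑σ) vf) := by
    intro m hm
    rw [hsupp] at hm
    obtain ⟨m', hm', rfl⟩ := Finset.mem_image.mp hm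
    exact hlm m' hm'
  obtain ⟨g, hgB, vg, hvg, hlmg, hrvg, π, hπ, u', hw, hcancel⟩ :=
    hGB f' hf'I hf'0 _ hvf' hlm'
  refine ⟨σ⁻¹ * π, mul_mem (inv_mem hσ) hπ, g, hgB,
    Finsupp.mapDomain (⇑(σ⁻¹ * π)) vg, ?_, ?_, Finsupp.mapDomain (⇑σ⁻¹) u', ?_⟩
  · rw [MvPolynomial.support_rename_of_injective (σ⁻¹ * π).injective]
    exact Finset.mem_image_of_mem _ hvg
  · intro m hm
    rw [MvPolynomial.support_rename_of_injective (σ⁻¹ * π).injective] at hm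
    obtain ⟨m', hm', rfl⟩ := Finset.mem_image.mp hm
    have hcomp : ∀ v : X →₀ ℕ, Finsupp.mapDomain (⇑σ) (Finsupp.mapDomain (⇑(σ⁻¹ * π)) v)
        = Finsupp.mapDomain (⇑π) v := by
      intro v
      rw [← Finsupp.mapDomain_comp]
      congr 1
      ext x
      simp [Equiv.Perm.mul_apply]
    rw [hcomp, hcomp]
    have h1 : r (u' + Finsupp.mapDomain (⇑π) m') (Finsupp.mapDomain (⇑σ) vf) :=
      hcancel m' (hlmg m' hm')
    rw [hw] at h1
    exact termOrder_cancel hr h1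
  · have := congrArg (Finsupp.mapDomain (⇑σ⁻¹)) hw
    rw [Finsupp.mapDomain_add, ← Finsupp.mapDomain_comp, ← Finsupp.mapDomain_comp] at this
    have hid : (⇑σ⁻¹ ∘ ⇑σ : X → X) = id := by ext x; simp
    rw [hid, Finsupp.mapDomain_id] at this
    have hcomp2 : Finsupp.mapDomain (⇑(σ⁻¹ * π)) vg
        = Finsupp.mapDomain (⇑σ⁻¹) (Finsupp.mapDomain (⇑π) vg) := by
      rw [← Finsupp.mapDomain_comp]
      congr 1
    rw [this, hcomp2, ← Finsupp.mapDomain_comp]
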